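/- Let B be a category and F : B ⥤ Cat a functor. The projection functor from the Grothendieck construction, ∫F ⥤ B, is a Grothendieck fibration (i.e. every morphism f : b → b' of B admits, for every object of ∫F over b', a strongly cartesian lift with that target) if and only if for every morphism f : b → b' of B the functor F.map f : F(b) ⥤ F(b') admits a right adjoint (i.e. is a left adjoint). -/

import Mathlib

open CategoryTheory Functor

universe v u v₁ u₁

variable {B : Type u₁} [Category.{v₁} B]

/-- The projection from the Grothendieck construction of `F : B ⥤ Cat` is a Grothendieck
fibration (every morphism of `B` admits strongly cartesian lifts with any prescribed target)
if and only if `F.map f` is a left adjoint (i.e. admits a right adjoint) for every morphism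
`f` of `B`. -/
theorem grothendieck_forget_isFibration_iff_leftAdjoints (F : B ⥤ Cat.{v, u}) :
    (∀ (y : Grothendieck F) (b : B) (f : b ⟶ (Grothendieck.forget F).obj y),
        ∃ (x : Grothendieck F) (φ : x ⟶ y), (Grothendieck.forget F).IsStronglyCartesian f φ) ↔
      ∀ {b b' : B} (f : b ⟶ b'), (F.map f).toFunctor.IsLeftAdjoint := by
  constructor
  · intro h b b' f
    suffices hT : ∀ (A : F.obj b'), Limits.HasTerminal (CostructuredArrow (F.map f).toFunctor A) from
      isLeftAdjoint_of_costructuredArrowTerminals _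
    intro A
    obtain ⟨x, φ, hsc⟩ := h ⟨b', A⟩ b f
    have := hsc.toIsHomLift
    have hx : x.base = b := IsHomLift.domain_eq (Grothendieck.forget F) (S := (Grothendieck.forget F).obj ⟨b', A⟩) f φ
    subst hx
    have hf : f = φ.base :=
      @IsHomLift.eq_of_isHomLift _ _ _ _ (Grothendieck.forget F) x ⟨b', A⟩ f φ this
    subst hf
    refine Limits.IsTerminal.hasTerminal (X := CostructuredArrow.mk (Y := x.fiber) φ.fiber) ?_
    have key : ∀ Z : CostructuredArrow (F.map φ.base).toFunctor A, ∃! u : Z.left ⟶ x.fiber,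
        (F.map φ.base).toFunctor.map u ≫ φ.fiber = Z.hom := by
      intro Z
      let φ' : Grothendieck.mk x.base Z.left ⟶ Grothendieck.mk b' A := ⟨φ.base, Z.hom⟩
      haveI : (Grothendieck.forget F).IsHomLift (R := (Grothendieck.forget F).obj (Grothendieck.mk x.base Z.left))
          (S := (Grothendieck.forget F).obj (Grothendieck.mk b' A)) (𝟙 x.base ≫ φ.base) φ' :=
        IsHomLift.of_fac _ _ _ rfl rfl (by simp [φ', Grothendieck.forget]; exact (Category.id_comp _).symm)
      obtain ⟨χ, ⟨hχl, hχc⟩, huniq⟩ :=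
        hsc.universal_property' (a' := Grothendieck.mk x.base Z.left) (𝟙 x.base) φ'
      have hχb : χ.base = 𝟙 x.base :=
        (@IsHomLift.eq_of_isHomLift _ _ _ _ (Grothendieck.forget F)
          (Grothendieck.mk x.base Z.left) x (𝟙 x.base) χ hχl).symm
      have e : Z.left = (F.map χ.base).toFunctor.obj Z.left := by rw [hχb]; simp
      refine ⟨eqToHom e ≫ χ.fiber, ?_, ?_⟩
      · have h1 := Grothendieck.congr hχc
        rw [Grothendieck.comp_fiber] at h1
        simp only [Functor.map_comp, eqToHom_map, Category.assoc]
        rw [eqToHom_comp_iff] at h1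
        rw [h1]
        simp [φ']
        erw [eqToHom_trans_assoc, eqToHom_trans_assoc, eqToHom_refl, Category.id_comp]
      · intro u' hu'
        let χ' : Grothendieck.mk x.base Z.left ⟶ x :=
          ⟨𝟙 x.base, eqToHom (by simp) ≫ u'⟩
        have hl' : (Grothendieck.forget F).IsHomLift (𝟙 x.base) χ' :=
          Functor.IsHomLift.map (p := Grothendieck.forget F) χ'
        have hc' : χ' ≫ φ = φ' := by
          refine Grothendieck.ext _ _ (by simp [χ', φ']) ?_
          rw [Grothendieck.comp_fiber]
          simp [χ', φ', eqToHom_map, hu']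
          erw [eqToHom_trans_assoc, eqToHom_trans_assoc, eqToHom_refl, Category.id_comp]
        have h2 := Grothendieck.congr (huniq χ' ⟨hl', hc'⟩)
        simp only [χ'] at h2
        rw [eqToHom_comp_iff] at h2
        rw [h2]
        simp
    exact Limits.IsTerminal.ofUniqueHom
      (fun Z => CostructuredArrow.homMk (key Z).choose
        (by simpa using (key Z).choose_spec.1))
      (fun Z m => by
        have := (key Z).choose_spec.2 m.left (by simpa using m.w)
        ext
        simpa using this)
  · intro h y b f
    letI : (F.map f).toFunctor.IsLeftAdjoint := h f
    let adj : (F.map f).toFunctor ⊣ (F.map f).toFunctor.rightAdjoint := Adjunction.ofIsLeftAdjoint (F.map f).toFunctor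
    refine ⟨⟨b, (F.map f).toFunctor.rightAdjoint.obj y.fiber⟩, ⟨f, adj.counit.app y.fiber⟩, ?_⟩
    haveI : (Grothendieck.forget F).IsHomLift f
        (Grothendieck.Hom.mk (X := ⟨b, (F.map f).toFunctor.rightAdjoint.obj y.fiber⟩) f
          (adj.counit.app y.fiber)) := Functor.IsHomLift.map (p := Grothendieck.forget F)
          (Grothendieck.Hom.mk (X := ⟨b, (F.map f).toFunctor.rightAdjoint.obj y.fiber⟩) (Y := y) f (adj.counit.app y.fiber))
    refine { universal_property' := ?_ }
    intro a' g φ' hl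
    have hb' : g ≫ f = φ'.base := IsHomLift.eq_of_isHomLift (Grothendieck.forget F) (g ≫ f) φ'
    let ψ : (F.map f).toFunctor.obj ((F.map g).toFunctor.obj a'.fiber) ⟶ y.fiber :=
      eqToHom (by rw [← hb']; exact congrArg (fun G => G.toFunctor.obj a'.fiber) (F.map_comp g f).symm) ≫ φ'.fiber
    refine ⟨⟨g, (adj.homEquiv _ _) ψ⟩, ⟨Functor.IsHomLift.map (p := Grothendieck.forget F)
      (Grothendieck.Hom.mk (X := a') (Y := ⟨b, (F.map f).toFunctor.rightAdjoint.obj y.fiber⟩) g ((adj.homEquiv _ _) ψ)), ?_⟩, ?_⟩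
    · refine Grothendieck.ext _ _ hb' ?_
      rw [Grothendieck.comp_fiber]
      have : (F.map f).toFunctor.map ((adj.homEquiv _ _) ψ) ≫ adj.counit.app y.fiber = ψ :=
        (adj.homEquiv _ _).left_inv ψ
      erw [this]
      simp [ψ]
      erw [eqToHom_trans_assoc, eqToHom_trans_assoc, eqToHom_refl, Category.id_comp]
    · rintro χ ⟨hχl, hχc⟩
      have hχb : χ.base = g :=
        (@IsHomLift.eq_of_isHomLift _ _ _ _ (Grothendieck.forget F) a'
          ⟨b, (F.map f).toFunctor.rightAdjoint.obj y.fiber⟩ g χ hχl).symm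
      refine Grothendieck.ext _ _ hχb ?_
      apply (adj.homEquiv _ _).symm.injective
      erw [Equiv.symm_apply_apply]
      show (F.map f).toFunctor.map (eqToHom _ ≫ χ.fiber) ≫ adj.counit.app y.fiber = ψ
      have h1 := Grothendieck.congr hχc
      rw [Grothendieck.comp_fiber] at h1
      dsimp only at h1
      rw [eqToHom_comp_iff] at h1
      simp only [Functor.map_comp, eqToHom_map, Category.assoc]
      erw [h1]
      simp [ψ]
      erw [eqToHom_map, eqToHom_trans_assoc, eqToHom_trans_assoc]
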